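/- For every 1 ≤ p < ∞ there exists a constant C > 0 such that for all n ≥ 1 the ℓ_p-distortion of the level-n Schreier graph Γ_n of the Grigorchuk group satisfies c_{(p)}(Γ_n) ≤ C. -/

import Mathlib

noncomputable section
open scoped ENNReal

/-- The generator `a` of the Grigorchuk group acting on finite binary words:
`a(xw) = (1−x)w`. -/
def grigA : List Bool → List Bool
  | [] => []
  | x :: w => (!x) :: w

mutual
  /-- The generator `b`: `b(0w) = 0·a(w)`, `b(1w) = 1·c(w)`. -/
  def grigB : List Bool → List Bool
    | [] => []
    | false :: w => false :: grigA w
    | true :: w => true :: grigC w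
  /-- The generator `c`: `c(0w) = 0·a(w)`, `c(1w) = 1·d(w)`. -/
  def grigC : List Bool → List Bool
    | [] => []
    | false :: w => false :: grigA w
    | true :: w => true :: grigD w
  /-- The generator `d`: `d(0w) = 0·w`, `d(1w) = 1·b(w)`. -/
  def grigD : List Bool → List Bool
    | [] => []
    | false :: w => false :: w
    | true :: w => true :: grigB w
end

/-- The level-`n` Schreier graph `Γ_n` of the Grigorchuk group: vertices are binary words of
length `n`, and distinct `x, y` are adjacent iff `y ∈ {a(x), b(x), c(x), d(x)}`
(the relation is symmetrized; since `a, b, c, d` are involutions it is the same relation). -/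
def grigGraph (n : ℕ) : SimpleGraph (List.Vector Bool n) where
  Adj x y := x ≠ y ∧ ∃ s ∈ [grigA, grigB, grigC, grigD],
    s x.toList = y.toList ∨ s y.toList = x.toList
  symm := ⟨by
    rintro x y ⟨h1, s, hs, h2⟩
    exact ⟨h1.symm, s, hs, h2.symm⟩⟩
  loopless := ⟨fun x h => h.1 rfl⟩

/-- The `ℓ_p`-distortion `c_{(p)}(X)` of a finite metric space `(X, d)`: the infimum over all
injective `1`-Lipschitz maps `F : X → ℓ_p(ℕ)` of `L_F = max_{x ≠ y} d(x,y)/‖F x − F y‖`. -/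
def lpDistortion (X : Type*) [Fintype X] (d : X → X → ℝ) (p : ℝ≥0∞) : ℝ :=
  sInf {L : ℝ | ∃ F : X → lp (fun _ : ℕ => ℝ) p, Function.Injective F ∧
    (∀ x y : X, ‖F x - F y‖ ≤ d x y) ∧
    L = sSup {r : ℝ | ∃ x y : X, x ≠ y ∧ r = d x y / ‖F x - F y‖}}


/-! ### Auxiliary development: the Schreier graph is a path -/

/-- Position of a binary word along the path structure of the Schreier graph. -/
def gpos : List Bool → ℕ
  | [] => 0
  | x :: w => 2 * gpos w + (gpos w + cond x 0 1) % 2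

lemma gpos_cons (x : Bool) (w : List Bool) :
    gpos (x :: w) = 2 * gpos w + (gpos w + cond x 0 1) % 2 := rfl

lemma gpos_bound : ∀ w : List Bool, gpos w < 2 ^ w.length
  | [] => by simp [gpos]
  | x :: w => by
    have h := gpos_bound w
    have h2 : (gpos w + cond x 0 1) % 2 < 2 := Nat.mod_lt _ (by norm_num)
    rw [gpos_cons, List.length_cons, pow_succ]
    omega

lemma gpos_inj : ∀ w v : List Bool, w.length = v.length → gpos w = gpos v → w = v
  | [], [], _, _ => rfl
  | x :: w, y :: v, hl, hp => by
    rw [gpos_cons, gpos_cons] at hp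
    have e1 : (gpos w + cond x 0 1) % 2 < 2 := Nat.mod_lt _ (by norm_num)
    have e2 : (gpos v + cond y 0 1) % 2 < 2 := Nat.mod_lt _ (by norm_num)
    have hg : gpos w = gpos v := by omega
    have hw : w = v := gpos_inj w v (by simpa using hl) hg
    subst hw
    have hmod : (gpos w + cond x 0 1) % 2 = (gpos w + cond y 0 1) % 2 := by omega
    have hb : x = y := by
      cases x <;> cases y <;>
        first
          | rfl
          | (simp only [Bool.cond_true, Bool.cond_false] at hmod; omega)
    rw [hb]

lemma gpos_surj : ∀ n k : ℕ, k < 2 ^ n → ∃ w : List Bool, w.length = n ∧ gpos w = k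
  | 0, k, hk => ⟨[], rfl, by simpa [gpos] using (by omega : k = 0).symm⟩
  | n + 1, k, hk => by
    have hp : k / 2 < 2 ^ n := by
      rw [pow_succ] at hk; omega
    obtain ⟨w, hw, hgw⟩ := gpos_surj n (k / 2) hp
    by_cases h : (gpos w + 1) % 2 = k % 2
    · exact ⟨false :: w, by simp [hw], by rw [gpos_cons]; simp only [Bool.cond_false]; omega⟩
    · refine ⟨true :: w, by simp [hw], ?_⟩
      rw [gpos_cons]; simp only [Bool.cond_true]; omega

lemma grigA_cons (x : Bool) (w : List Bool) : grigA (x :: w) = (!x) :: w := rfl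

lemma gpos_grigA (x : Bool) (w : List Bool) :
    (gpos (x :: w) % 2 = 0 → gpos (grigA (x :: w)) = gpos (x :: w) + 1) ∧
    (gpos (x :: w) % 2 = 1 → gpos (grigA (x :: w)) + 1 = gpos (x :: w)) := by
  rw [grigA_cons, gpos_cons, gpos_cons]
  cases x <;>
    simp only [Bool.not_true, Bool.not_false, Bool.cond_true, Bool.cond_false] <;> omega

lemma grigB_nil : grigB [] = [] := by simp [grigB]
lemma grigB_false (w : List Bool) : grigB (false :: w) = false :: grigA w := by simp [grigB]
lemma grigB_true (w : List Bool) : grigB (true :: w) = true :: grigC w := by simp [grigB]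
lemma grigC_nil : grigC [] = [] := by simp [grigC]
lemma grigC_false (w : List Bool) : grigC (false :: w) = false :: grigA w := by simp [grigC]
lemma grigC_true (w : List Bool) : grigC (true :: w) = true :: grigD w := by simp [grigC]
lemma grigD_nil : grigD [] = [] := by simp [grigD]
lemma grigD_false (w : List Bool) : grigD (false :: w) = false :: w := by simp [grigD]
lemma grigD_true (w : List Bool) : grigD (true :: w) = true :: grigB w := by simp [grigD]

/-- The possible moves of the generators `b`, `c`, `d` along the path. -/
def Smoves (s : List Bool → List Bool) (w : List Bool) : Prop :=
  s w = w ∨ (gpos w % 2 = 1 ∧ gpos (s w) = gpos w + 1) ∨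
    (gpos (s w) % 2 = 1 ∧ gpos w = gpos (s w) + 1)

lemma smoves_consA (w : List Bool) :
    false :: grigA w = false :: w ∨
      (gpos (false :: w) % 2 = 1 ∧ gpos (false :: grigA w) = gpos (false :: w) + 1) ∨
      (gpos (false :: grigA w) % 2 = 1 ∧ gpos (false :: w) = gpos (false :: grigA w) + 1) := by
  cases w with
  | nil => exact Or.inl rfl
  | cons y t =>
    right
    have hA := gpos_grigA y t
    rcases Nat.even_or_odd (gpos (y :: t)) with he | ho
    · have he' : gpos (y :: t) % 2 = 0 := Nat.even_iff.mp he
      have h1 := hA.1 he'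
      rw [gpos_cons (false) (y :: t), gpos_cons false (grigA (y :: t)), h1]
      simp only [Bool.cond_false]
      omega
    · have ho' : gpos (y :: t) % 2 = 1 := Nat.odd_iff.mp ho
      have h1 := hA.2 ho'
      rw [gpos_cons (false) (y :: t), gpos_cons false (grigA (y :: t))]
      simp only [Bool.cond_false]
      omega

lemma smoves_lift {s : List Bool → List Bool} {w : List Bool} (h : Smoves s w) :
    true :: s w = true :: w ∨
      (gpos (true :: w) % 2 = 1 ∧ gpos (true :: s w) = gpos (true :: w) + 1) ∨
      (gpos (true :: s w) % 2 = 1 ∧ gpos (true :: w) = gpos (true :: s w) + 1) := by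
  rcases h with h | ⟨h1, h2⟩ | ⟨h1, h2⟩
  · exact Or.inl (by rw [h])
  · right; left
    rw [gpos_cons true w, gpos_cons true (s w), h2]
    simp only [Bool.cond_true]
    omega
  · right; right
    rw [gpos_cons true w, gpos_cons true (s w), h2]
    simp only [Bool.cond_true]
    omega

lemma smoves_bcd : ∀ w : List Bool, Smoves grigB w ∧ Smoves grigC w ∧ Smoves grigD w := by
  intro w
  induction w with
  | nil => exact ⟨Or.inl grigB_nil, Or.inl grigC_nil, Or.inl grigD_nil⟩
  | cons x w ih =>
    obtain ⟨hb, hc, hd⟩ := ih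
    cases x with
    | false =>
      refine ⟨?_, ?_, Or.inl (by rw [grigD_false])⟩
      · unfold Smoves; rw [grigB_false]; exact smoves_consA w
      · unfold Smoves; rw [grigC_false]; exact smoves_consA w
    | true =>
      refine ⟨?_, ?_, ?_⟩
      · unfold Smoves; rw [grigB_true]; exact smoves_lift hc
      · unfold Smoves; rw [grigC_true]; exact smoves_lift hd
      · unfold Smoves; rw [grigD_true]; exact smoves_lift hb

/-- Words at consecutive positions are connected by a generator. -/
lemma consec : ∀ w v : List Bool, w.length = v.length → gpos v = gpos w + 1 →
    (gpos w % 2 = 0 → grigA w = v) ∧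
    (gpos w % 2 = 1 →
      grigB w = v ∨ grigB v = w ∨ grigC w = v ∨ grigC v = w ∨ grigD w = v ∨ grigD v = w)
  | [], v, hl, hp => by
    have hv : v = [] := List.length_eq_zero_iff.mp hl.symm
    subst hv
    simp [gpos] at hp
  | x :: w, [], hl, hp => by simp at hl
  | x :: w, y :: v, hl, hp => by
    have hl' : w.length = v.length := by simpa using hl
    rw [gpos_cons, gpos_cons] at hp
    have e1 : (gpos w + cond x 0 1) % 2 < 2 := Nat.mod_lt _ (by norm_num)
    have e2 : (gpos v + cond y 0 1) % 2 < 2 := Nat.mod_lt _ (by norm_num)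
    constructor
    · intro hev
      rw [gpos_cons] at hev
      have he : (gpos w + cond x 0 1) % 2 = 0 := by omega
      have hf : (gpos v + cond y 0 1) % 2 = 1 := by omega
      have hq : gpos w = gpos v := by omega
      have hwv : w = v := gpos_inj w v hl' hq
      subst hwv
      have hxy : y = !x := by
        cases x <;> cases y <;>
          simp only [Bool.cond_true, Bool.cond_false, Bool.not_true, Bool.not_false] at he hf ⊢ <;>
          omega
      rw [grigA_cons, hxy]
    · intro hodd
      rw [gpos_cons] at hodd
      have he : (gpos w + cond x 0 1) % 2 = 1 := by omega
      have hf : (gpos v + cond y 0 1) % 2 = 0 := by omega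
      have hq : gpos v = gpos w + 1 := by omega
      have IH := consec w v hl' hq
      by_cases hp2 : gpos w % 2 = 0
      · have ha : grigA w = v := IH.1 hp2
        have hx : x = false := by
          cases x
          · rfl
          · exfalso; simp only [Bool.cond_true] at he; omega
        have hy : y = false := by
          cases y
          · rfl
          · exfalso; simp only [Bool.cond_true] at hf; omega
        subst hx; subst hy
        exact Or.inl (by rw [grigB_false, ha])
      · have hp2' : gpos w % 2 = 1 := by omega
        have hx : x = true := by
          cases x
          · exfalso; simp only [Bool.cond_false] at he; omega
          · rfl
        have hy : y = true := by
          cases y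
          · exfalso; simp only [Bool.cond_false] at hf; omega
          · rfl
        subst hx; subst hy
        rcases IH.2 hp2' with h | h | h | h | h | h
        · exact Or.inr (Or.inr (Or.inr (Or.inr (Or.inl (by rw [grigD_true, h])))))
        · exact Or.inr (Or.inr (Or.inr (Or.inr (Or.inr (by rw [grigD_true, h])))))
        · exact Or.inl (by rw [grigB_true, h])
        · exact Or.inr (Or.inl (by rw [grigB_true, h]))
        · exact Or.inr (Or.inr (Or.inl (by rw [grigC_true, h])))
        · exact Or.inr (Or.inr (Or.inr (Or.inl (by rw [grigC_true, h]))))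

lemma adj_of_consec {n : ℕ} (u v : List.Vector Bool n)
    (h : gpos v.toList = gpos u.toList + 1) : (grigGraph n).Adj u v := by
  have hl : u.toList.length = v.toList.length := by
    rw [List.Vector.toList_length, List.Vector.toList_length]
  have hC := consec u.toList v.toList hl h
  have hne : u ≠ v := by
    intro e; rw [e] at h; omega
  refine ⟨hne, ?_⟩
  by_cases hp : gpos u.toList % 2 = 0
  · exact ⟨grigA, by simp, Or.inl (hC.1 hp)⟩
  · rcases hC.2 (by omega) with h | h | h | h | h | h
    · exact ⟨grigB, by simp, Or.inl h⟩
    · exact ⟨grigB, by simp, Or.inr h⟩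
    · exact ⟨grigC, by simp, Or.inl h⟩
    · exact ⟨grigC, by simp, Or.inr h⟩
    · exact ⟨grigD, by simp, Or.inl h⟩
    · exact ⟨grigD, by simp, Or.inr h⟩

lemma walk_of_add {n : ℕ} : ∀ (m : ℕ) (u v : List.Vector Bool n),
    gpos v.toList = gpos u.toList + m → ∃ w : (grigGraph n).Walk u v, w.length = m
  | 0, u, v, h => by
    have huv : u = v := List.Vector.toList_injective
      (gpos_inj _ _ (by rw [List.Vector.toList_length, List.Vector.toList_length])
        (by omega))
    subst huv
    exact ⟨SimpleGraph.Walk.nil, rfl⟩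
  | m + 1, u, v, h => by
    have hb : gpos v.toList < 2 ^ n := by
      have := gpos_bound v.toList
      rwa [List.Vector.toList_length] at this
    obtain ⟨l, hl, hpl⟩ := gpos_surj n (gpos u.toList + 1) (by omega)
    let z : List.Vector Bool n := ⟨l, hl⟩
    have hz : gpos z.toList = gpos u.toList + 1 := hpl
    obtain ⟨wk, hwk⟩ := walk_of_add m z v (by rw [hz]; omega)
    exact ⟨SimpleGraph.Walk.cons (adj_of_consec u z hz) wk,
      by rw [SimpleGraph.Walk.length_cons, hwk]⟩

lemma gen_move_le : ∀ s ∈ [grigA, grigB, grigC, grigD], ∀ w : List Bool,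
    gpos (s w) ≤ gpos w + 1 ∧ gpos w ≤ gpos (s w) + 1 := by
  intro s hs w
  simp only [List.mem_cons, List.mem_singleton, List.not_mem_nil, or_false] at hs
  rcases hs with rfl | rfl | rfl | rfl
  · cases w with
    | nil => simp [grigA]
    | cons x t =>
      have := gpos_grigA x t
      rcases Nat.even_or_odd (gpos (x :: t)) with he | ho
      · have := this.1 (Nat.even_iff.mp he); omega
      · have := this.2 (Nat.odd_iff.mp ho); omega
  · rcases (smoves_bcd w).1 with h | ⟨_, h⟩ | ⟨_, h⟩ <;> first | (rw [h]; omega) | omega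
  · rcases (smoves_bcd w).2.1 with h | ⟨_, h⟩ | ⟨_, h⟩ <;> first | (rw [h]; omega) | omega
  · rcases (smoves_bcd w).2.2 with h | ⟨_, h⟩ | ⟨_, h⟩ <;> first | (rw [h]; omega) | omega

lemma adj_move_le {n : ℕ} {u v : List.Vector Bool n} (h : (grigGraph n).Adj u v) :
    gpos v.toList ≤ gpos u.toList + 1 ∧ gpos u.toList ≤ gpos v.toList + 1 := by
  obtain ⟨_, s, hs, hcase⟩ := h
  rcases hcase with hc | hc
  · have := gen_move_le s hs u.toList
    rw [hc] at this
    omega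
  · have := gen_move_le s hs v.toList
    rw [hc] at this
    omega

lemma walk_move_le {n : ℕ} {u v : List.Vector Bool n} (wk : (grigGraph n).Walk u v) :
    gpos v.toList ≤ gpos u.toList + wk.length ∧ gpos u.toList ≤ gpos v.toList + wk.length := by
  induction wk with
  | nil => simp
  | cons hadj tail ih =>
    have h1 := adj_move_le hadj
    rw [SimpleGraph.Walk.length_cons]
    omega

lemma grig_dist_eq_of_le {n : ℕ} (u v : List.Vector Bool n)
    (h : gpos u.toList ≤ gpos v.toList) :
    (grigGraph n).dist u v = gpos v.toList - gpos u.toList := by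
  obtain ⟨wk, hwk⟩ := walk_of_add (n := n) (gpos v.toList - gpos u.toList) u v (by omega)
  have h1 : (grigGraph n).dist u v ≤ gpos v.toList - gpos u.toList := by
    have := SimpleGraph.dist_le wk
    omega
  have hr : (grigGraph n).Reachable u v := ⟨wk⟩
  obtain ⟨wk', hwk'⟩ := hr.exists_walk_length_eq_dist
  have h2 := walk_move_le wk'
  omega

lemma grig_dist_eq {n : ℕ} (u v : List.Vector Bool n) :
    (grigGraph n).dist u v = Nat.dist (gpos u.toList) (gpos v.toList) := by
  rcases le_total (gpos u.toList) (gpos v.toList) with hle | hle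
  · rw [grig_dist_eq_of_le u v hle, Nat.dist_eq_sub_of_le hle]
  · rw [SimpleGraph.dist_comm, grig_dist_eq_of_le v u hle, Nat.dist_eq_sub_of_le_right hle]

lemma natdist_cast (a b : ℕ) : |(a : ℝ) - (b : ℝ)| = (Nat.dist a b : ℝ) := by
  rcases le_total a b with h | h
  · rw [Nat.dist_eq_sub_of_le h, Nat.cast_sub h, abs_sub_comm]
    exact abs_of_nonneg (by have : (a:ℝ) ≤ b := Nat.cast_le.mpr h; linarith)
  · rw [Nat.dist_eq_sub_of_le_right h, Nat.cast_sub h]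
    exact abs_of_nonneg (by have : (b:ℝ) ≤ a := Nat.cast_le.mpr h; linarith)

/-- cf. Proposition 9's context: for each `1 ≤ p < ∞` the `ℓ_p`-distortion of the
Schreier graphs `Γ_n` of the Grigorchuk group is uniformly bounded. -/
theorem statement_6 (p : ℝ) (hp : 1 ≤ p) :
    ∃ C : ℝ, 0 < C ∧ ∀ n : ℕ, 1 ≤ n →
      lpDistortion (List.Vector Bool n)
          (fun x y => ((grigGraph n).dist x y : ℝ)) (ENNReal.ofReal p) ≤ C := by
  refine ⟨1, one_pos, fun n hn => ?_⟩
  set pE : ℝ≥0∞ := ENNReal.ofReal p with hpE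
  haveI : Fact (1 ≤ pE) := ⟨by
    rw [hpE, ← ENNReal.ofReal_one]
    exact ENNReal.ofReal_le_ofReal hp⟩
  have hpt : 0 < pE.toReal := by
    rw [hpE, ENNReal.toReal_ofReal (by linarith)]; linarith
  set F : List.Vector Bool n → lp (fun _ : ℕ => ℝ) pE :=
    fun x => lp.single pE 0 ((gpos x.toList : ℝ)) with hF
  have hsub : ∀ x y : List.Vector Bool n,
      F x - F y = lp.single pE 0 ((gpos x.toList : ℝ) - (gpos y.toList : ℝ)) := by
    intro x y
    apply lp.ext
    rw [lp.coeFn_sub]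
    funext j
    by_cases hj : j = 0
    · subst hj
      simp only [hF, Pi.sub_apply, lp.single_apply_self]
    · simp only [hF, Pi.sub_apply, lp.single_apply_ne _ _ _ hj, sub_zero]
  have hnorm : ∀ x y : List.Vector Bool n,
      ‖F x - F y‖ = (Nat.dist (gpos x.toList) (gpos y.toList) : ℝ) := by
    intro x y
    rw [hsub x y, ← natdist_cast]
    have h := lp.norm_single (E := fun _ : ℕ => ℝ) (ENNReal.toReal_pos_iff.mp hpt).1
      0 ((gpos x.toList : ℝ) - (gpos y.toList : ℝ))
    rw [h, Real.norm_eq_abs]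
  have hgne : ∀ x y : List.Vector Bool n, x ≠ y → gpos x.toList ≠ gpos y.toList := by
    intro x y hxy h
    exact hxy (List.Vector.toList_injective (gpos_inj _ _
      (by rw [List.Vector.toList_length, List.Vector.toList_length]) h))
  have hinj : Function.Injective F := by
    intro x y h
    have h0 : (F x : ∀ _ : ℕ, ℝ) 0 = (F y : ∀ _ : ℕ, ℝ) 0 := by rw [h]
    simp only [hF, lp.single_apply_self] at h0
    by_contra hxy
    exact hgne x y hxy (Nat.cast_injective h0)
  have hlip : ∀ x y : List.Vector Bool n,
      ‖F x - F y‖ ≤ ((grigGraph n).dist x y : ℝ) := by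
    intro x y
    rw [hnorm, grig_dist_eq]
  have hexists : ∃ x y : List.Vector Bool n, x ≠ y := by
    obtain ⟨l0, hl0, hg0⟩ := gpos_surj n 0 (by positivity)
    obtain ⟨l1, hl1, hg1⟩ := gpos_surj n 1 (Nat.one_lt_two_pow_iff.mpr (by omega))
    refine ⟨⟨l0, hl0⟩, ⟨l1, hl1⟩, fun h => ?_⟩
    have : l0 = l1 := congrArg List.Vector.toList h
    rw [this, hg1] at hg0
    exact one_ne_zero hg0
  have hratio : ∀ x y : List.Vector Bool n, x ≠ y →
      ((grigGraph n).dist x y : ℝ) / ‖F x - F y‖ = 1 := by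
    intro x y hxy
    rw [hnorm, grig_dist_eq]
    have hd : Nat.dist (gpos x.toList) (gpos y.toList) ≠ 0 := fun h =>
      hgne x y hxy (Nat.eq_of_dist_eq_zero h)
    exact div_self (by exact_mod_cast hd)
  have hset : {r : ℝ | ∃ x y : List.Vector Bool n, x ≠ y ∧
      r = ((grigGraph n).dist x y : ℝ) / ‖F x - F y‖} = {1} := by
    ext r
    simp only [Set.mem_setOf_eq, Set.mem_singleton_iff]
    constructor
    · rintro ⟨x, y, hxy, rfl⟩
      exact hratio x y hxy
    · rintro rfl
      obtain ⟨x, y, hxy⟩ := hexists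
      exact ⟨x, y, hxy, (hratio x y hxy).symm⟩
  refine csInf_le ⟨0, ?_⟩ ?_
  · rintro L ⟨F', _, _, rfl⟩
    apply Real.sSup_nonneg
    rintro r ⟨x, y, _, rfl⟩
    exact div_nonneg (Nat.cast_nonneg _) (norm_nonneg _)
  · exact ⟨F, hinj, hlip, by rw [hset, csSup_singleton]⟩
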